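/- Let A_{α,β} be the non-weight Virasoro module on A = ℂ[t^{±1}, (t−a₁)^{−1}, …, (t−a_r)^{−1}] with action L_i·f = (∂ + α + iβ)(t^i f), where ∂ = t d/dt, α ∈ ℂ(t)∖ℂ with pole set {a₁,…,a_r}, and β ∈ ℂ. If (A_{α,β}, δ) is a 1-differential module over (Vir, d_{n,a}) with Δ := δ + id ≠ 0, then Δ(t^i f) = a^i t^{ni} Δ(f) for all i ∈ ℤ and f ∈ A_{α,β}; consequently Δ(f) = f(at^n)·Δ(1) for all f ∈ A_{α,β}. -/

import Mathlib

/-- The defining bracket relations of the Virasoro algebra on a family `L : ℤ → V`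
and a central element `C`. -/
def VirRel {V : Type*} [LieRing V] [LieAlgebra ℂ V] (L : ℤ → V) (C : V) : Prop :=
  (∀ m n : ℤ, ⁅L m, L n⁆ = ((n : ℂ) - (m : ℂ)) • L (m + n)
      + (if m + n = 0 then ((m : ℂ) ^ 3 - (m : ℂ)) / 12 else 0) • C) ∧
  ∀ m : ℤ, ⁅C, L m⁆ = 0

/-- `f` has the values of `φ_n ∘ τ_a` on the basis:
`f(L_i) = (a^i/n)(L_{ni} - δ_{i,0}((n²-1)/24)C)` and `f(C) = nC`. -/
def PhiTau {V : Type*} [LieRing V] [LieAlgebra ℂ V] (L : ℤ → V) (C : V)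
    (n : ℤ) (a : ℂ) (f : V →ₗ[ℂ] V) : Prop :=
  (∀ i : ℤ, f (L i) = (a ^ i / (n : ℂ)) •
      (L (n * i) - (if i = 0 then ((n : ℂ) ^ 2 - 1) / 24 else 0) • C)) ∧
  f C = (n : ℂ) • C


/-- The action of `L_i` on `A_{α,β} ⊆ ℂ(t)`:
`L_i·f = (∂ + α + iβ)(t^i f)` where `∂ = t d/dt` is a derivation with `∂t = t`. -/
noncomputable def virAct (Der : Derivation ℂ (RatFunc ℂ) (RatFunc ℂ))
    (α : RatFunc ℂ) (β : ℂ) (i : ℤ) (f : RatFunc ℂ) : RatFunc ℂ :=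
  Der (RatFunc.X ^ i * f) + (α + RatFunc.C ((i : ℂ) * β)) * (RatFunc.X ^ i * f)

/-- The "error term" `Δ(t^i f) - a^i t^{ni} Δ(f)` where `Δ = δ + id`. -/
noncomputable def Ee (δ : RatFunc ℂ →ₗ[ℂ] RatFunc ℂ) (n : ℤ) (a : ℂ) (i : ℤ) (f : RatFunc ℂ) :
    RatFunc ℂ :=
  δ (RatFunc.X ^ i * f) + RatFunc.X ^ i * f
    - RatFunc.C (a ^ i) * (RatFunc.X ^ (n * i) * (δ f + f))

lemma Ee_zero (δ : RatFunc ℂ →ₗ[ℂ] RatFunc ℂ) (n : ℤ) (a : ℂ) (f : RatFunc ℂ) :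
    Ee δ n a 0 f = 0 := by
  simp [Ee]

lemma Ee_step (δ : RatFunc ℂ →ₗ[ℂ] RatFunc ℂ) (n : ℤ) {a : ℂ} (ha : a ≠ 0) (i j : ℤ)
    (f : RatFunc ℂ) :
    Ee δ n a (i + j) f = Ee δ n a i (RatFunc.X ^ j * f)
      + RatFunc.C (a ^ i) * (RatFunc.X ^ (n * i) * Ee δ n a j f) := by
  have h1 : RatFunc.X ^ (i + j) * f = RatFunc.X ^ i * (RatFunc.X ^ j * f) := by
    rw [zpow_add₀ (RatFunc.X_ne_zero (K := ℂ))]; ring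
  simp only [Ee]
  rw [h1, zpow_add₀ ha, map_mul (RatFunc.C (K := ℂ)) (a ^ i) (a ^ j), mul_add n,
    zpow_add₀ (RatFunc.X_ne_zero (K := ℂ))]
  ring

/-- for a 1-differential module structure on `A_{α,β}` over
`(Vir, d_{n,a})` with `Δ = δ + id ≠ 0`, one has `Δ(t^i f) = a^i t^{ni} Δ(f)`, and
consequently `Δ(f) = f(at^n)·Δ(1)` (with `σ` the substitution `t ↦ at^n`). -/
theorem stmt_19 {V : Type*} [LieRing V] [LieAlgebra ℂ V]
    (L : ℤ → V) (C : V)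
    (bb : Module.Basis (Option ℤ) ℂ V) (hbL : ∀ i : ℤ, bb (some i) = L i)
    (hbC : bb none = C) (hrel : VirRel L C)
    (r : ℕ) (av : Fin r → ℂ) (hinj : Function.Injective av) (hne : ∀ i, av i ≠ 0)
    (A : Subalgebra ℂ (RatFunc ℂ))
    (hA : A = Algebra.adjoin ℂ
      ({RatFunc.X, (RatFunc.X)⁻¹} ∪ Set.range fun i : Fin r =>
        (RatFunc.X - RatFunc.C (av i))⁻¹))
    (Der : Derivation ℂ (RatFunc ℂ) (RatFunc ℂ)) (hDer : Der RatFunc.X = RatFunc.X)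
    (α : RatFunc ℂ) (hαA : α ∈ A) (hα : α ∉ Set.range (RatFunc.C (K := ℂ)))
    (β : ℂ)
    (n : ℤ) (hn : n ≠ 0) (a : ℂ) (ha : a ≠ 0)
    (δ : RatFunc ℂ →ₗ[ℂ] RatFunc ℂ) (hδA : ∀ f ∈ A, δ f ∈ A)
    -- the 1-differential module condition over (Vir, d_{n,a}) on the basis L_i:
    (hdm : ∀ (i : ℤ) (f : RatFunc ℂ), f ∈ A →
      δ (virAct Der α β i f) =
        ((a ^ i / (n : ℂ)) • virAct Der α β (n * i) f - virAct Der α β i f) +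
        virAct Der α β i (δ f) +
        ((a ^ i / (n : ℂ)) • virAct Der α β (n * i) (δ f) - virAct Der α β i (δ f)))
    -- Δ = δ + id is nonzero on A:
    (hΔ : ∃ f ∈ A, δ f + f ≠ 0)
    -- σ is the substitution t ↦ a t^n:
    (σ : RatFunc ℂ →ₐ[ℂ] RatFunc ℂ)
    (hσ : σ RatFunc.X = RatFunc.C a * RatFunc.X ^ n) :
    (∀ (i : ℤ) (f : RatFunc ℂ), f ∈ A →
        δ (RatFunc.X ^ i * f) + RatFunc.X ^ i * f =
          a ^ i • (RatFunc.X ^ (n * i) * (δ f + f))) ∧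
    (∀ f ∈ A, δ f + f = σ f * (δ 1 + 1)) := by
  classical
  have hX0 : (RatFunc.X : RatFunc ℂ) ≠ 0 := RatFunc.X_ne_zero
  have hn' : (n : ℂ) ≠ 0 := Int.cast_ne_zero.mpr hn
  have hCmul : ∀ (c : ℂ) (x : RatFunc ℂ), c • x = RatFunc.C c * x := RatFunc.smul_eq_C_mul
  have hδC : ∀ (c : ℂ) (x : RatFunc ℂ), δ (RatFunc.C c * x) = RatFunc.C c * δ x := by
    intro c x
    rw [← hCmul, map_smul, hCmul]
  have hDerC : ∀ (c : ℂ) (x : RatFunc ℂ), Der (RatFunc.C c * x) = RatFunc.C c * Der x := by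
    intro c x
    rw [← hCmul, Derivation.map_smul, hCmul]
  have hDerzpow : ∀ i : ℤ, Der (RatFunc.X ^ i) = RatFunc.C (i : ℂ) * RatFunc.X ^ i := by
    intro i
    rw [Derivation.leibniz_zpow, hDer, smul_eq_mul, ← zpow_add_one₀ hX0]
    have h1 : i - 1 + 1 = i := by ring
    rw [h1, ← Int.cast_smul_eq_zsmul ℂ, hCmul]
  have hDmul : ∀ (i : ℤ) (g : RatFunc ℂ),
      Der (RatFunc.X ^ i * g)
        = RatFunc.C (i : ℂ) * (RatFunc.X ^ i * g) + RatFunc.X ^ i * Der g := by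
    intro i g
    rw [Derivation.leibniz, smul_eq_mul, smul_eq_mul, hDerzpow]
    ring
  -- expanded form of the action
  have hV : ∀ (k : ℤ) (g : RatFunc ℂ), virAct Der α β k g
      = RatFunc.X ^ k * (Der g + α * g) + RatFunc.C (k : ℂ) * (RatFunc.X ^ k * g)
        + RatFunc.C (k : ℂ) * (RatFunc.C β * (RatFunc.X ^ k * g)) := by
    intro k g
    have hc : RatFunc.C ((k : ℂ) * β) = RatFunc.C (k : ℂ) * RatFunc.C β := map_mul _ _ _
    simp only [virAct, hDmul, hc]
    ring
  have hVadd : ∀ (k : ℤ) (x y : RatFunc ℂ),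
      virAct Der α β k (x + y) = virAct Der α β k x + virAct Der α β k y := by
    intro k x y
    simp only [virAct, mul_add, map_add]
    ring
  -- the scaled differential-module identity
  have hstar : ∀ (i : ℤ) (f : RatFunc ℂ), f ∈ A →
      RatFunc.C (n : ℂ) * (δ (virAct Der α β i f) + virAct Der α β i f)
        = RatFunc.C (a ^ i) * virAct Der α β (n * i) (δ f + f) := by
    intro i f hf
    have h := hdm i f hf
    simp only [hCmul] at h
    have hcc : RatFunc.C (a ^ i / (n : ℂ)) * RatFunc.C (n : ℂ) = RatFunc.C (a ^ i) := by
      rw [← map_mul]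
      congr 1
      field_simp
    rw [hVadd]
    linear_combination RatFunc.C (n : ℂ) * h
      + (virAct Der α β (n * i) (δ f) + virAct Der α β (n * i) f) * hcc
  have hV0 : ∀ g : RatFunc ℂ, virAct Der α β 0 g = Der g + α * g := by
    intro g
    simp [virAct]
  have hstar0 : ∀ f : RatFunc ℂ, f ∈ A →
      RatFunc.C (n : ℂ) * (δ (Der f + α * f) + (Der f + α * f))
        = Der (δ f + f) + α * (δ f + f) := by
    intro f hf
    have h := hstar 0 f hf
    rw [mul_zero, hV0, hV0, zpow_zero, map_one, one_mul] at h
    exact h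
  -- membership facts
  have hXA : RatFunc.X ∈ A := by
    rw [hA]; exact Algebra.subset_adjoin (Or.inl (Set.mem_insert _ _))
  have hXinvA : (RatFunc.X : RatFunc ℂ)⁻¹ ∈ A := by
    rw [hA]; exact Algebra.subset_adjoin (Or.inl (Set.mem_insert_of_mem _ rfl))
  have hXzpowA : ∀ i : ℤ, (RatFunc.X : RatFunc ℂ) ^ i ∈ A := by
    intro i
    rcases le_or_gt 0 i with hi | hi
    · lift i to ℕ using hi
      rw [zpow_natCast]
      exact pow_mem hXA _
    · have h2 : (RatFunc.X : RatFunc ℂ) ^ i = (RatFunc.X)⁻¹ ^ (-i).toNat := by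
        rw [inv_pow, ← zpow_natCast, Int.toNat_of_nonneg (by omega), zpow_neg, inv_inv]
      rw [h2]
      exact pow_mem hXinvA _
  have hXiA : ∀ (i : ℤ) (g : RatFunc ℂ), g ∈ A → RatFunc.X ^ i * g ∈ A :=
    fun i g hg => mul_mem (hXzpowA i) hg
  -- key identity (b)
  have hM2 : ∀ (i : ℤ) (f : RatFunc ℂ), f ∈ A →
      RatFunc.C (n : ℂ) * (δ (RatFunc.X ^ i * (Der f + α * f))
          + RatFunc.X ^ i * (Der f + α * f))
        + RatFunc.C (n : ℂ) * (RatFunc.C (i : ℂ) * ((1 + RatFunc.C β) * Ee δ n a i f))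
      = RatFunc.C (a ^ i) * (RatFunc.X ^ (n * i) * (Der (δ f + f) + α * (δ f + f))) := by
    intro i f hf
    have h := hstar i f hf
    rw [hV i f, hV (n * i) (δ f + f)] at h
    simp only [Ee]
    simp only [map_add, hδC] at h ⊢
    push_cast at h ⊢
    simp only [map_mul] at h ⊢
    linear_combination h
  -- the eigen-equation (F1)
  have hF1 : ∀ (i : ℤ) (f : RatFunc ℂ), f ∈ A →
      Der (Ee δ n a i f) + α * Ee δ n a i f
        = RatFunc.C (-((n : ℂ) * (i : ℂ) * β)) * Ee δ n a i f := by
    intro i f hf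
    have hf' : RatFunc.X ^ i * f ∈ A := hXiA i f hf
    have c1 := hstar0 (RatFunc.X ^ i * f) hf'
    have harg : Der (RatFunc.X ^ i * f) + α * (RatFunc.X ^ i * f)
        = RatFunc.X ^ i * (Der f + α * f) + RatFunc.C (i : ℂ) * (RatFunc.X ^ i * f) := by
      rw [hDmul]; ring
    rw [harg] at c1
    have b := hM2 i f hf
    simp only [Ee] at b ⊢
    simp only [map_add, map_sub, hδC, hDerC, hDmul, map_neg] at c1 b ⊢
    push_cast at c1 b ⊢
    simp only [map_mul] at c1 b ⊢
    linear_combination b - c1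
  -- eigenvector independence
  have heig : ∀ (v1 v2 v3 : RatFunc ℂ) (c1 c2 c3 : ℂ),
      v1 = v2 + v3 →
      Der v1 + α * v1 = RatFunc.C c1 * v1 →
      Der v2 + α * v2 = RatFunc.C c2 * v2 →
      Der v3 + α * v3 = RatFunc.C c3 * v3 →
      c3 ≠ c1 → c3 ≠ c2 → v3 = 0 := by
    intro v1 v2 v3 c1 c2 c3 h h1 h2 h3 ne1 ne2
    have hD : Der v1 = Der v2 + Der v3 := by rw [h, map_add]
    have e1 : RatFunc.C c1 * v1 = RatFunc.C c2 * v2 + RatFunc.C c3 * v3 := by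
      linear_combination -h1 + h2 + h3 + hD + α * h
    have hD2 : Der (RatFunc.C c1 * v1) = Der (RatFunc.C c2 * v2) + Der (RatFunc.C c3 * v3) := by
      rw [e1, map_add]
    simp only [hDerC] at hD2
    have e2 : RatFunc.C c1 * (RatFunc.C c1 * v1)
        = RatFunc.C c2 * (RatFunc.C c2 * v2) + RatFunc.C c3 * (RatFunc.C c3 * v3) := by
      linear_combination -(RatFunc.C c1 * h1) + RatFunc.C c2 * h2 + RatFunc.C c3 * h3
        + hD2 + α * e1
    have key : (RatFunc.C c3 - RatFunc.C c1) * ((RatFunc.C c3 - RatFunc.C c2) * v3) = 0 := by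
      linear_combination -e2 + (RatFunc.C c1 + RatFunc.C c2) * e1
        - (RatFunc.C c1 * RatFunc.C c2) * h
    have hCinj : Function.Injective (RatFunc.C (K := ℂ)) := RingHom.injective _
    rcases mul_eq_zero.mp key with h0 | h0
    · have hc : RatFunc.C c3 = RatFunc.C c1 := by linear_combination h0
      exact absurd (hCinj hc) ne1
    rcases mul_eq_zero.mp h0 with h0' | h0'
    · have hc : RatFunc.C c3 = RatFunc.C c2 := by linear_combination h0'
      exact absurd (hCinj hc) ne2
    · exact h0'
  -- eigen equation for X^{nk}-shifted eigenvectors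
  have h3gen : ∀ (k : ℤ) (w : RatFunc ℂ) (c : ℂ), Der w + α * w = RatFunc.C c * w →
      Der (RatFunc.C (a ^ k) * (RatFunc.X ^ (n * k) * w))
        + α * (RatFunc.C (a ^ k) * (RatFunc.X ^ (n * k) * w))
      = RatFunc.C ((n : ℂ) * (k : ℂ) + c)
          * (RatFunc.C (a ^ k) * (RatFunc.X ^ (n * k) * w)) := by
    intro k w c hw
    simp only [hDerC, hDmul, map_add]
    push_cast
    simp only [map_mul]
    linear_combination (RatFunc.C (a ^ k) * RatFunc.X ^ (n * k)) * hw
  -- the main vanishing result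
  have hEzero : ∀ (j : ℤ), j ≠ 0 → ∀ (f : RatFunc ℂ), f ∈ A → Ee δ n a j f = 0 := by
    intro j hj f hf
    have hjc : (j : ℂ) ≠ 0 := Int.cast_ne_zero.mpr hj
    have hCinj : Function.Injective (RatFunc.C (K := ℂ)) := RingHom.injective _
    have hfin : ∀ i : ℤ, RatFunc.C (a ^ i) * (RatFunc.X ^ (n * i) * Ee δ n a j f) = 0 →
        Ee δ n a j f = 0 := by
      intro i h0
      rcases mul_eq_zero.mp h0 with h1 | h1
      · have hc0 : a ^ i = (0 : ℂ) := hCinj (by rw [h1, map_zero])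
        exact absurd hc0 (zpow_ne_zero i ha)
      rcases mul_eq_zero.mp h1 with h2 | h2
      · exact absurd h2 (zpow_ne_zero _ hX0)
      · exact h2
    by_cases hβ : β = -1
    · -- use i = -j, v1 = Ee 0 f = 0
      have hrel0 := Ee_step δ n ha (-j) j f
      rw [neg_add_cancel, Ee_zero] at hrel0
      apply hfin (-j)
      refine heig 0 (Ee δ n a (-j) (RatFunc.X ^ j * f))
        (RatFunc.C (a ^ (-j)) * (RatFunc.X ^ (n * -j) * Ee δ n a j f))
        ((n : ℂ) * ((-j : ℤ) : ℂ) + -((n : ℂ) * (j : ℂ) * β) + 1)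
        (-((n : ℂ) * ((-j : ℤ) : ℂ) * β))
        ((n : ℂ) * ((-j : ℤ) : ℂ) + -((n : ℂ) * (j : ℂ) * β))
        hrel0 (by simp) (hF1 (-j) (RatFunc.X ^ j * f) (hXiA j f hf))
        (h3gen (-j) (Ee δ n a j f) _ (hF1 j f hf)) ?_ ?_
      · intro hh
        exact one_ne_zero (by linear_combination -hh : (1 : ℂ) = 0)
      · subst hβ
        push_cast
        intro hh
        exact (mul_ne_zero hn' hjc) (by linear_combination hh)
    · -- β ≠ -1
      have h1β : (1 : ℂ) + β ≠ 0 := fun hh => hβ (by linear_combination hh)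
      obtain ⟨i, hi1, hi2⟩ : ∃ i : ℤ, ((i : ℂ) * (1 + β) ≠ 0)
          ∧ ((i : ℂ) * (1 + β) ≠ (j : ℂ) * β) := by
        by_cases hc : (1 : ℂ) * (1 + β) = (j : ℂ) * β
        · refine ⟨2, ?_, ?_⟩
          · push_cast
            exact mul_ne_zero two_ne_zero h1β
          · push_cast
            intro hh
            exact h1β (by linear_combination hh - hc)
        · refine ⟨1, ?_, ?_⟩
          · push_cast
            simpa using h1β
          · push_cast
            simpa using hc
      apply hfin i
      refine heig (Ee δ n a (i + j) f) (Ee δ n a i (RatFunc.X ^ j * f))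
        (RatFunc.C (a ^ i) * (RatFunc.X ^ (n * i) * Ee δ n a j f))
        (-((n : ℂ) * (((i + j : ℤ)) : ℂ) * β))
        (-((n : ℂ) * (i : ℂ) * β))
        ((n : ℂ) * (i : ℂ) + -((n : ℂ) * (j : ℂ) * β))
        (Ee_step δ n ha i j f) (hF1 (i + j) f hf)
        (hF1 i (RatFunc.X ^ j * f) (hXiA j f hf))
        (h3gen i (Ee δ n a j f) _ (hF1 j f hf)) ?_ ?_
      · push_cast
        intro hh
        exact (mul_ne_zero hn' hi1) (by linear_combination hh)
      · push_cast
        intro hh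
        exact (mul_ne_zero hn' (sub_ne_zero.mpr hi2)) (by linear_combination hh)
  -- Part 1
  have hpart1 : ∀ (i : ℤ) (f : RatFunc ℂ), f ∈ A →
      δ (RatFunc.X ^ i * f) + RatFunc.X ^ i * f
        = a ^ i • (RatFunc.X ^ (n * i) * (δ f + f)) := by
    intro i f hf
    rw [hCmul]
    rcases eq_or_ne i 0 with rfl | hi
    · have h0 := Ee_zero δ n a f
      simp only [Ee] at h0
      linear_combination h0
    · have h0 := hEzero i hi f hf
      simp only [Ee] at h0
      linear_combination h0
  refine ⟨hpart1, ?_⟩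
  -- Part 2
  have hP1 : ∀ (i : ℤ) (g : RatFunc ℂ), g ∈ A →
      δ (RatFunc.X ^ i * g) + RatFunc.X ^ i * g
        = RatFunc.C (a ^ i) * (RatFunc.X ^ (n * i) * (δ g + g)) := by
    intro i g hg
    rw [← hCmul]
    exact hpart1 i g hg
  have hσinj : Function.Injective σ := RingHom.injective (σ : RatFunc ℂ →+* RatFunc ℂ)
  have hσC : ∀ c : ℂ, σ (RatFunc.C c) = RatFunc.C c := by
    intro c
    have h := σ.commutes c
    rwa [RatFunc.algebraMap_eq_C] at h
  have hfB : ∀ f' : RatFunc ℂ, f' ∈ Algebra.adjoin ℂ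
      ({RatFunc.X, (RatFunc.X)⁻¹} ∪ Set.range fun i : Fin r =>
        (RatFunc.X - RatFunc.C (av i))⁻¹) →
      ∀ g : RatFunc ℂ, g ∈ A → δ g + g = σ g * (δ 1 + 1) →
      (f' * g ∈ A ∧ δ (f' * g) + f' * g = σ (f' * g) * (δ 1 + 1)) := by
    intro f' hf'
    induction hf' using Algebra.adjoin_induction with
    | mem x hx =>
      intro g hg hgeq
      rcases hx with hx | ⟨k, rfl⟩
      · rcases hx with rfl | hx
        · -- x = X
          refine ⟨mul_mem hXA hg, ?_⟩
          have h := hP1 1 g hg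
          rw [zpow_one, zpow_one, mul_one, hgeq] at h
          rw [map_mul σ RatFunc.X g, hσ, h]
          ring
        · -- x = X⁻¹
          rw [Set.mem_singleton_iff] at hx
          subst hx
          refine ⟨mul_mem hXinvA hg, ?_⟩
          have h := hP1 (-1) g hg
          have e1 : (RatFunc.X : RatFunc ℂ) ^ (-1 : ℤ) = RatFunc.X⁻¹ := by
            rw [zpow_neg, zpow_one]
          have e2 : a ^ (-1 : ℤ) = a⁻¹ := by rw [zpow_neg, zpow_one]
          have e3 : (RatFunc.X : RatFunc ℂ) ^ (n * (-1) : ℤ) = (RatFunc.X ^ n)⁻¹ := by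
            rw [mul_neg_one, zpow_neg]
          rw [e1, e2, e3, hgeq] at h
          rw [map_mul σ RatFunc.X⁻¹ g, map_inv₀ σ, hσ, h,
            map_inv₀ (RatFunc.C (K := ℂ)), mul_inv]
          ring
      · -- x = (X - C (av k))⁻¹
        have hwA : (RatFunc.X - RatFunc.C (av k))⁻¹ ∈ A := by
          rw [hA]; exact Algebra.subset_adjoin (Or.inr ⟨k, rfl⟩)
        refine ⟨mul_mem hwA hg, ?_⟩
        have hXc : RatFunc.X - RatFunc.C (av k) ≠ 0 := by
          have heq : RatFunc.X - RatFunc.C (av k)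
              = algebraMap (Polynomial ℂ) (RatFunc ℂ) (Polynomial.X - Polynomial.C (av k)) := by
            rw [map_sub, RatFunc.algebraMap_X, RatFunc.algebraMap_C]
          rw [heq]
          exact RatFunc.algebraMap_ne_zero (Polynomial.X_sub_C_ne_zero _)
        have hw1 : (RatFunc.X - RatFunc.C (av k)) * (RatFunc.X - RatFunc.C (av k))⁻¹ = 1 :=
          mul_inv_cancel₀ hXc
        have hwg : (RatFunc.X - RatFunc.C (av k))⁻¹ * g ∈ A := mul_mem hwA hg
        have h := hP1 1 ((RatFunc.X - RatFunc.C (av k))⁻¹ * g) hwg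
        rw [zpow_one, zpow_one, mul_one] at h
        have hXwg : RatFunc.X * ((RatFunc.X - RatFunc.C (av k))⁻¹ * g)
            = g + RatFunc.C (av k) * ((RatFunc.X - RatFunc.C (av k))⁻¹ * g) := by
          linear_combination g * hw1
        rw [hXwg, map_add, hδC] at h
        have hσwne : σ (RatFunc.X - RatFunc.C (av k)) ≠ 0 :=
          fun h0 => hXc (hσinj (by rw [h0, map_zero]))
        have key : σ (RatFunc.X - RatFunc.C (av k))
            * (δ ((RatFunc.X - RatFunc.C (av k))⁻¹ * g)
              + (RatFunc.X - RatFunc.C (av k))⁻¹ * g) = σ g * (δ 1 + 1) := by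
          rw [map_sub, hσ, hσC]
          linear_combination hgeq - h
        apply mul_left_cancel₀ hσwne
        rw [key, ← mul_assoc, ← map_mul, ← mul_assoc, hw1, one_mul]
    | algebraMap c =>
      intro g hg hgeq
      rw [RatFunc.algebraMap_eq_C]
      refine ⟨mul_mem (by rw [← RatFunc.algebraMap_eq_C]; exact A.algebraMap_mem c) hg, ?_⟩
      rw [hδC, map_mul σ (RatFunc.C c) g, hσC]
      linear_combination RatFunc.C c * hgeq
    | add x y hx hy ihx ihy =>
      intro g hg hgeq
      obtain ⟨m1, e1⟩ := ihx g hg hgeq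
      obtain ⟨m2, e2⟩ := ihy g hg hgeq
      rw [add_mul]
      refine ⟨add_mem m1 m2, ?_⟩
      rw [map_add δ, map_add σ, add_mul]
      linear_combination e1 + e2
    | mul x y hx hy ihx ihy =>
      intro g hg hgeq
      have r2 := ihy g hg hgeq
      have r1 := ihx (y * g) r2.1 r2.2
      rw [mul_assoc]
      exact r1
  intro f hf
  have base : δ 1 + 1 = σ 1 * (δ 1 + 1) := by
    rw [map_one σ, one_mul]
  have hfin := hfB f (by rw [← hA]; exact hf) 1 (one_mem A) base
  rw [mul_one] at hfin
  exact hfin.2
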